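/- Let y = (y_1,…,y_n) be a list of n positive integers. If y is minimally invariant, then for every i ∈ {1,…,n} the restriction (y_1,…,y_i) is minimally invariant. -/

import Mathlib

open Classical in
/-- One car attempts to park on a one-way street with spots `1, …, m`: given the set
`occ` of occupied spots, the car with preference `p` and length `l` parks in spots
`j, j+1, …, j+l-1` for the least `j ≥ p` such that these spots all exist (are `≤ m`)
and are unoccupied; returns the new set of occupied spots, or `none` if parking fails. -/
noncomputable def parkOne (m : ℕ) (occ : Finset ℕ) (p l : ℕ) : Option (Finset ℕ) :=
  if h : ∃ j, p ≤ j ∧ j + l ≤ m + 1 ∧ ∀ k ∈ Finset.Ico j (j + l), k ∉ occ then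
    some (occ ∪ Finset.Ico (Nat.find h) (Nat.find h + l))
  else none

/-- Run the parking-assortment process for the cars `(preference, length)` in order. -/
noncomputable def parkList (m : ℕ) : List (ℕ × ℕ) → Finset ℕ → Option (Finset ℕ)
  | [], occ => some occ
  | c :: rest, occ => (parkOne m occ c.1 c.2).bind (parkList m rest)

/-- `x` is a parking assortment for the list of car lengths `y`. -/
def IsPA (y x : List ℕ) : Prop :=
  x.length = y.length ∧ (∀ a ∈ x, 1 ≤ a ∧ a ≤ y.sum) ∧
    (parkList y.sum (x.zip y) ∅).isSome

/-- `PA y` is the set of parking assortments for `y`. -/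
def PA (y : List ℕ) : Set (List ℕ) := {x | IsPA y x}

/-- `PAinv y` is the set of (permutation-)invariant parking assortments for `y`:
those preference lists all of whose rearrangements are parking assortments for `y`. -/
def PAinv (y : List ℕ) : Set (List ℕ) := {x | ∀ x', x'.Perm x → IsPA y x'}

/-- `y` is minimally invariant if the all-ones list is the only invariant
parking assortment for `y`. -/
def MinInv (y : List ℕ) : Prop := PAinv y = {List.replicate y.length 1}

/-! ### basic lemmas -/

def Fits (m : ℕ) (occ : Finset ℕ) (p l j : ℕ) : Prop :=
  p ≤ j ∧ j + l ≤ m + 1 ∧ ∀ k ∈ Finset.Ico j (j + l), k ∉ occ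

lemma parkOne_eq_some_of {m p l j : ℕ} {occ : Finset ℕ} (hj : Fits m occ p l j)
    (hmin : ∀ j' < j, ¬ Fits m occ p l j') :
    parkOne m occ p l = some (occ ∪ Finset.Ico j (j + l)) := by
  have h : ∃ j, p ≤ j ∧ j + l ≤ m + 1 ∧ ∀ k ∈ Finset.Ico j (j + l), k ∉ occ := ⟨j, hj⟩
  rw [parkOne, dif_pos h]
  have : Nat.find h = j := (Nat.find_eq_iff h).mpr ⟨hj, hmin⟩
  rw [this]

lemma parkOne_eq_some_elim {m p l : ℕ} {occ o : Finset ℕ} (h : parkOne m occ p l = some o) :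
    ∃ j, Fits m occ p l j ∧ (∀ j' < j, ¬ Fits m occ p l j') ∧
      o = occ ∪ Finset.Ico j (j + l) := by
  classical
  rw [parkOne] at h
  split_ifs at h with hex
  · exact ⟨Nat.find hex, Nat.find_spec hex, fun j' hj' => Nat.find_min hex hj',
      (Option.some_inj.mp h).symm⟩

lemma parkOne_isSome_of {m p l j : ℕ} {occ : Finset ℕ} (hj : Fits m occ p l j) :
    (parkOne m occ p l).isSome := by
  rw [parkOne, dif_pos ⟨j, hj⟩]; rfl

lemma parkOne_none_elim {m p l : ℕ} {occ : Finset ℕ} (h : parkOne m occ p l = none) :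
    ∀ j, ¬ Fits m occ p l j := by
  rw [parkOne] at h
  split_ifs at h with hex
  · exact fun j hj => hex ⟨j, hj⟩

lemma parkList_cons (m : ℕ) (p l : ℕ) (cs : List (ℕ × ℕ)) (O : Finset ℕ) :
    parkList m ((p, l) :: cs) O = (parkOne m O p l).bind (parkList m cs) := rfl

lemma parkList_append (m : ℕ) (c₁ c₂ : List (ℕ × ℕ)) (O : Finset ℕ) :
    parkList m (c₁ ++ c₂) O = (parkList m c₁ O).bind (parkList m c₂) := by
  induction c₁ generalizing O with
  | nil => simp [parkList]
  | cons c cs ih =>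
    rw [List.cons_append, parkList, parkList]
    cases parkOne m O c.1 c.2 with
    | none => simp
    | some o => simp [ih o]

lemma isSome_bind_elim {α β : Type*} {o : Option α} {f : α → Option β}
    (h : (o.bind f).isSome) : ∃ a, o = some a ∧ (f a).isSome := by
  cases o with
  | none => simp at h
  | some a => exact ⟨a, rfl, by simpa using h⟩

/-- cardinality / subset facts for a successful run -/
lemma parkList_card {m : ℕ} : ∀ (cars : List (ℕ × ℕ)) (O S : Finset ℕ),
    parkList m cars O = some S → (∀ c ∈ cars, 1 ≤ c.1) → O ⊆ Finset.Icc 1 m →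
    S ⊆ Finset.Icc 1 m ∧ S.card = O.card + (cars.map Prod.snd).sum
  | [], O, S, h, _, hO => by
      simp [parkList] at h; subst h; simpa using hO
  | c :: cs, O, S, h, hp, hO => by
      rw [parkList] at h
      cases hone : parkOne m O c.1 c.2 with
      | none => rw [hone] at h; simp at h
      | some o =>
        rw [hone] at h; simp only [Option.bind_some, Option.bind_some] at h
        obtain ⟨j, ⟨hpj, hjm, hfree⟩, -, rfl⟩ := parkOne_eq_some_elim hone
        have hp1 : 1 ≤ c.1 := hp c (List.mem_cons_self (a := c) (l := cs))
        have hblock : Finset.Ico j (j + c.2) ⊆ Finset.Icc 1 m := by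
          intro k hk
          simp only [Finset.mem_Ico] at hk
          simp only [Finset.mem_Icc]
          omega
        have hdisj : Disjoint O (Finset.Ico j (j + c.2)) := by
          rw [Finset.disjoint_right]
          intro k hk
          exact hfree k hk
        have hsub : O ∪ Finset.Ico j (j + c.2) ⊆ Finset.Icc 1 m :=
          Finset.union_subset hO hblock
        obtain ⟨h1, h2⟩ := parkList_card cs _ S h (fun d hd => hp d (List.mem_cons_of_mem c hd)) hsub
        refine ⟨h1, ?_⟩
        rw [h2, Finset.card_union_of_disjoint hdisj]
        simp [Nat.card_Ico]
        ring

/-- a successful run that uses up exactly the street fills it -/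
lemma parkList_fill {m : ℕ} {cars : List (ℕ × ℕ)} {O S : Finset ℕ}
    (h : parkList m cars O = some S) (hp : ∀ c ∈ cars, 1 ≤ c.1)
    (hO : O ⊆ Finset.Icc 1 m) (hsum : O.card + (cars.map Prod.snd).sum = m) :
    S = Finset.Icc 1 m := by
  obtain ⟨h1, h2⟩ := parkList_card cars O S h hp hO
  apply Finset.eq_of_subset_of_card_le h1
  rw [h2, hsum, Nat.card_Icc]
  omega

/-- all spots of the final configuration are in `O` or `≥` a lower bound on prefs -/
lemma parkList_lb {m q : ℕ} : ∀ (cars : List (ℕ × ℕ)) (O S : Finset ℕ),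
    parkList m cars O = some S → (∀ c ∈ cars, q ≤ c.1) →
    ∀ s ∈ S, s ∈ O ∨ q ≤ s
  | [], O, S, h, _ => by simp [parkList] at h; subst h; exact fun s hs => Or.inl hs
  | c :: cs, O, S, h, hp => by
      rw [parkList] at h
      cases hone : parkOne m O c.1 c.2 with
      | none => rw [hone] at h; simp at h
      | some o =>
        rw [hone] at h; simp only [Option.bind_some, Option.bind_some] at h
        obtain ⟨j, ⟨hpj, hjm, hfree⟩, -, rfl⟩ := parkOne_eq_some_elim hone
        intro s hs
        rcases parkList_lb cs _ S h (fun d hd => hp d (List.mem_cons_of_mem c hd)) s hs with hin | hq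
        · rcases Finset.mem_union.mp hin with h' | h'
          · exact Or.inl h'
          · right
            have := hp c (List.mem_cons_self (a := c) (l := cs))
            simp only [Finset.mem_Ico] at h'
            omega
        · exact Or.inr hq

/-- extending the street does not change a successful run -/
lemma parkOne_mono {m M p l : ℕ} {occ o : Finset ℕ} (hmM : m ≤ M)
    (h : parkOne m occ p l = some o) : parkOne M occ p l = some o := by
  obtain ⟨j, ⟨h1, h2, h3⟩, hmin, rfl⟩ := parkOne_eq_some_elim h
  apply parkOne_eq_some_of ⟨h1, by omega, h3⟩
  intro j' hj' ⟨g1, g2, g3⟩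
  exact hmin j' hj' ⟨g1, by omega, g3⟩

lemma parkList_mono {m M : ℕ} (hmM : m ≤ M) : ∀ (cars : List (ℕ × ℕ)) (O S : Finset ℕ),
    parkList m cars O = some S → parkList M cars O = some S
  | [], O, S, h => h
  | c :: cs, O, S, h => by
      rw [parkList] at h ⊢
      cases hone : parkOne m O c.1 c.2 with
      | none => rw [hone] at h; simp at h
      | some o =>
        rw [hone] at h
        rw [parkOne_mono hmM hone]
        simp only [Option.bind_some, Option.bind_some] at h ⊢
        exact parkList_mono hmM cs o S h

/-! ### the replacement lemma -/

lemma exists_list_min (x : List ℕ) (hx : x ≠ []) : ∃ q ∈ x, ∀ a ∈ x, q ≤ a := by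
  induction x with
  | nil => simp at hx
  | cons a l ih =>
    rcases eq_or_ne l [] with rfl | hl
    · exact ⟨a, by simp⟩
    · obtain ⟨q, hq, hmin⟩ := ih hl
      rcases le_total a q with h | h
      · refine ⟨a, by simp, fun c hc => ?_⟩
        rcases List.mem_cons.mp hc with rfl | hc
        exacts [le_rfl, le_trans h (hmin c hc)]
      · refine ⟨q, List.mem_cons_of_mem a hq, fun c hc => ?_⟩
        rcases List.mem_cons.mp hc with rfl | hc
        exacts [h, hmin c hc]

lemma peel {m L c : ℕ} {Y' x : List ℕ} {O : Finset ℕ}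
    (hP : ∀ v : List ℕ, v.Perm x → (parkList m (v.zip (L :: Y')) O).isSome) (hc : c ∈ x) :
    ∃ o, parkOne m O c L = some o ∧
      ∀ w : List ℕ, w.Perm (x.erase c) → (parkList m (w.zip Y') o).isSome := by
  have h1 := hP (c :: x.erase c) (List.perm_cons_erase hc).symm
  rw [List.zip_cons_cons, parkList_cons] at h1
  obtain ⟨o, ho, _⟩ := isSome_bind_elim h1
  refine ⟨o, ho, fun w hw => ?_⟩
  have h2 := hP (c :: w) (((hw).cons c).trans (List.perm_cons_erase hc).symm)
  rw [List.zip_cons_cons, parkList_cons, ho] at h2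
  simpa using h2

/-- The key lemma: if every rearrangement of `x` parks (lengths `Y`, street `m`,
initial occupancy `O` with exact fill), `p ∈ x`, and `r` is at most every entry of `x`
(and `r ≥ 1`), then every rearrangement of `x` with `p` replaced by `r` parks. -/
lemma replace_lemma : ∀ (Y x : List ℕ) (O : Finset ℕ) (m p r : ℕ),
    x.length = Y.length →
    (∀ a ∈ x, 1 ≤ a) → (∀ l ∈ Y, 1 ≤ l) →
    O ⊆ Finset.Icc 1 m → O.card + Y.sum = m →
    (∀ v : List ℕ, v.Perm x → (parkList m (v.zip Y) O).isSome) →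
    p ∈ x → 1 ≤ r → (∀ a ∈ x, r ≤ a) →
    ∀ v' : List ℕ, v'.Perm (r :: x.erase p) → (parkList m (v'.zip Y) O).isSome
  | [], x, O, m, p, r, hlen, _, _, _, _, _, hp, _, _, v', hv' => by
      rw [List.length_nil, List.length_eq_zero_iff] at hlen
      subst hlen; simp at hp
  | L :: Y', x, O, m, p, r, hlen, hx1, hY1, hOsub, hOcard, hP, hp, hr1, hrmin, v', hv' => by
      have hL1 : 1 ≤ L := hY1 L (List.mem_cons_self (a := L) (l := Y'))
      have hlen' : x.length = Y'.length + 1 := by simpa using hlen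
      have hY'1 : ∀ l ∈ Y', 1 ≤ l := fun l hl => hY1 l (List.mem_cons_of_mem L hl)
      have hxne : x ≠ [] := by
        intro h; subst h; simp at hp
      -- v' is nonempty
      have hv'len : v'.length = x.length := by
        rw [hv'.length_eq]
        simp [List.length_erase_of_mem hp]
        have : 1 ≤ x.length := List.length_pos_iff.mpr hxne
        omega
      obtain ⟨c, t, rfl⟩ : ∃ c t, v' = c :: t := by
        cases v' with
        | nil => exfalso; rw [List.length_nil] at hv'len; exact hxne (List.length_eq_zero_iff.mp hv'len.symm)
        | cons c t => exact ⟨c, t, rfl⟩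
      rw [List.zip_cons_cons, parkList_cons]
      rcases eq_or_ne c r with hceq | hcr
      · -- case 2 : the first car is the replaced (small) preference
        subst hceq
        have ht : t.Perm (x.erase p) := hv'.cons_inv
        obtain ⟨q₀, hq₀x, hq₀min⟩ := exists_list_min x hxne
        obtain ⟨o, ho, hrest⟩ := peel hP hq₀x
        obtain ⟨j, hfit, hjmin, rfl⟩ := parkOne_eq_some_elim ho
        -- every spot in [1, q₀) is occupied in O
        have hlow : ∀ s, 1 ≤ s → s < q₀ → s ≤ m → s ∈ O := by
          intro s h1 h2 h3
          have hq := hP (q₀ :: x.erase q₀) (List.perm_cons_erase hq₀x).symm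
          obtain ⟨S, hS⟩ := Option.isSome_iff_exists.mp hq
          have hpref : ∀ d ∈ (q₀ :: x.erase q₀).zip (L :: Y'), q₀ ≤ d.1 := by
            intro d hd
            have := (List.of_mem_zip hd).1
            rcases List.mem_cons.mp this with h | h
            · omega
            · exact hq₀min d.1 (List.mem_of_mem_erase h)
          have hpref1 : ∀ d ∈ (q₀ :: x.erase q₀).zip (L :: Y'), 1 ≤ d.1 := by
            intro d hd
            have := (List.of_mem_zip hd).1
            rcases List.mem_cons.mp this with h | h
            · have := hx1 q₀ hq₀x; omega
            · exact hx1 d.1 (List.mem_of_mem_erase h)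
          have hmap : ((q₀ :: x.erase q₀).zip (L :: Y')).map Prod.snd = L :: Y' := by
            apply List.map_snd_zip
            simp [List.length_erase_of_mem hq₀x]
            omega
          have hfill : S = Finset.Icc 1 m := by
            apply parkList_fill hS hpref1 hOsub
            rw [hmap, hOcard]
          have := parkList_lb _ _ _ hS hpref s (by rw [hfill]; simp only [Finset.mem_Icc]; omega)
          rcases this with h | h
          · exact h
          · omega
        -- the r-car parks exactly where the q₀-car would
        have hor : parkOne m O c L = some (O ∪ Finset.Ico j (j + L)) := by
          apply parkOne_eq_some_of ⟨le_trans (hrmin q₀ hq₀x) hfit.1, hfit.2.1, hfit.2.2⟩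
          intro j' hj' ⟨g1, g2, g3⟩
          rcases le_or_gt q₀ j' with h | h
          · exact hjmin j' hj' ⟨h, g2, g3⟩
          · have hj'O : j' ∈ O := hlow j' (by omega) h (by omega)
            exact g3 j' (by simp [Finset.mem_Ico]; omega) hj'O
        rw [hor]
        simp only [Option.bind_some]
        rcases eq_or_ne p q₀ with rfl | hpq
        · exact hrest t ht
        · -- recurse, replacing p by q₀ inside x.erase q₀
          have hq₀ep : q₀ ∈ x.erase p := (List.mem_erase_of_ne hpq.symm).mpr hq₀x
          have ht' : t.Perm (q₀ :: (x.erase q₀).erase p) := by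
            refine ht.trans ((List.perm_cons_erase hq₀ep).trans ?_)
            rw [List.erase_comm]
          have hdisj : Disjoint O (Finset.Ico j (j + L)) := by
            rw [Finset.disjoint_right]; exact fun k hk => hfit.2.2 k hk
          apply replace_lemma Y' (x.erase q₀) (O ∪ Finset.Ico j (j + L)) m p q₀
          · rw [List.length_erase_of_mem hq₀x]
            omega
          · exact fun a ha => hx1 a (List.mem_of_mem_erase ha)
          · exact hY'1
          · apply Finset.union_subset hOsub
            intro k hk
            simp only [Finset.mem_Ico] at hk
            have := hfit.1; have := hfit.2.1
            have := hx1 q₀ hq₀x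
            simp only [Finset.mem_Icc]
            omega
          · rw [Finset.card_union_of_disjoint hdisj, Nat.card_Ico]
            simp at hOcard ⊢
            omega
          · exact hrest
          · exact (List.mem_erase_of_ne hpq).mpr hp
          · exact hx1 q₀ hq₀x
          · exact fun a ha => hq₀min a (List.mem_of_mem_erase ha)
          · exact ht'
      · -- case 1 : the first car is a genuine entry of x
        have hcmem : c ∈ x.erase p := by
          have := hv'.mem_iff.mp (List.mem_cons_self (a := c) (l := t))
          rcases List.mem_cons.mp this with h | h
          · exact absurd h hcr
          · exact h
        have hcx : c ∈ x := List.mem_of_mem_erase hcmem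
        have ht : t.Perm (r :: (x.erase p).erase c) := by
          have h1 := (List.cons_perm_iff_perm_erase.mp hv').2
          rwa [List.erase_cons_tail (by simpa using Ne.symm hcr)] at h1
        obtain ⟨o, ho, hrest⟩ := peel hP hcx
        obtain ⟨j, hfit, hjmin, rfl⟩ := parkOne_eq_some_elim ho
        rw [ho]
        simp only [Option.bind_some]
        have hdisj : Disjoint O (Finset.Ico j (j + L)) := by
          rw [Finset.disjoint_right]; exact fun k hk => hfit.2.2 k hk
        have hpec : p ∈ x.erase c := by
          rcases eq_or_ne c p with rfl | hne
          · exact hcmem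
          · exact (List.mem_erase_of_ne hne.symm).mpr hp
        apply replace_lemma Y' (x.erase c) (O ∪ Finset.Ico j (j + L)) m p r
        · rw [List.length_erase_of_mem hcx]
          omega
        · exact fun a ha => hx1 a (List.mem_of_mem_erase ha)
        · exact hY'1
        · apply Finset.union_subset hOsub
          intro k hk
          simp only [Finset.mem_Ico] at hk
          have := hfit.1; have := hfit.2.1
          have := hx1 c hcx
          simp only [Finset.mem_Icc]
          omega
        · rw [Finset.card_union_of_disjoint hdisj, Nat.card_Ico]
          simp only [List.sum_cons] at hOcard
          omega
        · exact hrest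
        · exact hpec
        · exact hr1
        · exact fun a ha => hrmin a (List.mem_of_mem_erase ha)
        · rw [List.erase_comm] at ht
          exact ht

/-! ### all-ones preferences -/

lemma ones_park : ∀ (ys : List ℕ) (c m : ℕ), (∀ l ∈ ys, 1 ≤ l) → c + ys.sum ≤ m →
    parkList m ((List.replicate ys.length 1).zip ys) (Finset.Icc 1 c) =
      some (Finset.Icc 1 (c + ys.sum))
  | [], c, m, _, _ => by simp [parkList]
  | l :: ys, c, m, hpos, hle => by
      have hl1 : 1 ≤ l := hpos l (List.mem_cons_self (a := l) (l := ys))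
      have hsum : (l :: ys).sum = l + ys.sum := by simp
      rw [List.length_cons, List.replicate_succ, List.zip_cons_cons, parkList_cons]
      have hone : parkOne m (Finset.Icc 1 c) 1 l =
          some (Finset.Icc 1 c ∪ Finset.Ico (c + 1) (c + 1 + l)) := by
        apply parkOne_eq_some_of
        · refine ⟨by omega, by rw [hsum] at hle; omega, ?_⟩
          intro k hk
          simp only [Finset.mem_Ico] at hk
          simp only [Finset.mem_Icc]
          omega
        · intro j' hj' ⟨g1, g2, g3⟩
          refine g3 j' (by simp only [Finset.mem_Ico]; omega) ?_
          simp only [Finset.mem_Icc]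
          omega
      have hun : Finset.Icc 1 c ∪ Finset.Ico (c + 1) (c + 1 + l) = Finset.Icc 1 (c + l) := by
        ext k
        simp only [Finset.mem_union, Finset.mem_Icc, Finset.mem_Ico]
        omega
      rw [hone, hun]
      simp only [Option.bind_some]
      have := ones_park ys (c + l) m (fun a ha => hpos a (List.mem_cons_of_mem l ha))
        (by rw [hsum] at hle; omega)
      have harr : c + (l :: ys).sum = c + l + ys.sum := by rw [hsum]; omega
      rw [harr]
      exact this

lemma replicate_mem_PAinv (ys : List ℕ) (hys : ∀ a ∈ ys, 0 < a) :
    List.replicate ys.length 1 ∈ PAinv ys := by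
  intro x' hx'
  rw [List.perm_replicate] at hx'
  subst hx'
  refine ⟨by simp, ?_, ?_⟩
  · intro a ha
    have ha1 := List.eq_of_mem_replicate ha
    subst ha1
    refine ⟨le_rfl, ?_⟩
    have hne : ys ≠ [] := by
      intro h
      subst h
      simp at ha
    obtain ⟨b, hb⟩ := List.exists_mem_of_ne_nil ys hne
    have := List.single_le_sum (fun x _ => Nat.zero_le x) b hb
    have := hys b hb
    omega
  · have h0 : Finset.Icc 1 0 = (∅ : Finset ℕ) := by simp
    have := ones_park ys 0 ys.sum (fun a ha => hys a ha) (by omega)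
    rw [h0] at this
    rw [this]
    rfl

/-! ### the extension step -/

lemma minInv_step (ys : List ℕ) (l : ℕ) (hys : ∀ a ∈ ys, 0 < a) (hl : 0 < l)
    (hmin : MinInv (ys ++ [l])) : MinInv ys := by
  unfold MinInv at *
  apply Set.eq_of_subset_of_subset
  · intro x hx
    have hIs : IsPA ys x := hx x (List.Perm.refl x)
    obtain ⟨hxlen, hxbd, -⟩ := hIs
    set m := ys.sum with hm
    have hM : (ys ++ [l]).sum = m + l := by simp [hm]
    have hmem : (x ++ [1]) ∈ PAinv (ys ++ [l]) := by
      intro z hz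
      have hzlen : z.length = ys.length + 1 := by
        rw [hz.length_eq]
        simp [hxlen]
      refine ⟨by simpa using hzlen, ?_, ?_⟩
      · intro a ha
        have := hz.mem_iff.mp ha
        rcases List.mem_append.mp this with h | h
        · obtain ⟨h1, h2⟩ := hxbd a h
          refine ⟨h1, ?_⟩
          rw [hM]
          omega
        · simp at h
          subst h
          refine ⟨le_rfl, ?_⟩
          rw [hM]
          omega
      · have hzne : z ≠ [] := by
          intro h
          rw [h] at hzlen
          simp at hzlen
        obtain ⟨z', cl, hsplit⟩ : ∃ z' cl, z' ++ [cl] = z :=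
          ⟨z.dropLast, z.getLast hzne, List.dropLast_append_getLast hzne⟩
        have hz'len : z'.length = ys.length := by
          have := congrArg List.length hsplit
          simp only [List.length_append, List.length_singleton] at this
          omega
        -- the first ys.length cars fill [1, m]
        have hfirst : parkList ((ys ++ [l]).sum) (z'.zip ys) ∅ = some (Finset.Icc 1 m) := by
          have hperm : (cl :: z').Perm (1 :: x) := by
            refine ((List.perm_append_singleton cl z').symm.trans ?_).trans
              (List.perm_append_singleton 1 x)
            rw [hsplit]
            exact hz
          have hsome : (parkList m (z'.zip ys) ∅).isSome := by
            rcases eq_or_ne cl 1 with rfl | hcl1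
            · have : z'.Perm x := hperm.cons_inv
              exact (hx z' this).2.2
            · have hclx : cl ∈ x := by
                have := hperm.mem_iff.mp (List.mem_cons_self (a := cl) (l := z'))
                rcases List.mem_cons.mp this with h | h
                · exact absurd h hcl1
                · exact h
              have hz'p : z'.Perm (1 :: x.erase cl) := by
                have h1 := (List.cons_perm_iff_perm_erase.mp hperm).2
                rwa [List.erase_cons_tail (by simpa using Ne.symm hcl1)] at h1
              exact replace_lemma ys x ∅ m cl 1 hxlen (fun a ha => (hxbd a ha).1)
                (fun a ha => hys a ha) (Finset.empty_subset _) (by simp [hm])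
                (fun v hv => (hx v hv).2.2) hclx le_rfl
                (fun a ha => (hxbd a ha).1) z' hz'p
          obtain ⟨S, hS⟩ := Option.isSome_iff_exists.mp hsome
          have hpref1 : ∀ d ∈ z'.zip ys, 1 ≤ d.1 := by
            intro d hd
            have hd1 := (List.of_mem_zip hd).1
            have : d.1 ∈ z := by
              rw [← hsplit]
              exact List.mem_append.mpr (Or.inl hd1)
            have := hz.mem_iff.mp this
            rcases List.mem_append.mp this with h | h
            · exact (hxbd _ h).1
            · simp at h
              omega
          have hmap : (z'.zip ys).map Prod.snd = ys :=
            List.map_snd_zip (le_of_eq hz'len.symm)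
          have hfill : S = Finset.Icc 1 m := by
            apply parkList_fill hS hpref1 (Finset.empty_subset _)
            rw [hmap]
            simp [hm]
          rw [hfill] at hS
          exact parkList_mono (by rw [hM]; omega) _ _ _ hS
        -- now the last car parks
        have hclle : cl ≤ m + 1 := by
          have : cl ∈ z := by
            rw [← hsplit]
            simp
          have := hz.mem_iff.mp this
          rcases List.mem_append.mp this with h | h
          · have := (hxbd _ h).2
            omega
          · simp at h
            omega
        rw [← hsplit, List.zip_append hz'len, parkList_append, hfirst]
        simp only [Option.bind_some]
        have hone : (parkOne ((ys ++ [l]).sum) (Finset.Icc 1 m) cl l).isSome := by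
          apply parkOne_isSome_of (j := m + 1)
          refine ⟨hclle, by rw [hM]; omega, ?_⟩
          intro k hk
          simp only [Finset.mem_Ico] at hk
          simp only [Finset.mem_Icc]
          omega
        obtain ⟨o, ho⟩ := Option.isSome_iff_exists.mp hone
        simp only [List.zip_cons_cons, List.zip_nil_right, parkList_cons, ho]
        rfl
    rw [hmin] at hmem
    simp only [Set.mem_singleton_iff] at hmem
    have hlen2 : (ys ++ [l]).length = ys.length + 1 := by simp
    rw [hlen2, List.replicate_succ'] at hmem
    have : x = List.replicate ys.length 1 := List.append_cancel_right hmem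
    simp [this, hxlen]
  · intro x hx
    simp only [Set.mem_singleton_iff] at hx
    subst hx
    exact replicate_mem_PAinv ys hys


theorem stmt10 (y : List ℕ) (hy : ∀ a ∈ y, 0 < a) (hmin : MinInv y) :
    ∀ i, 1 ≤ i → i ≤ y.length → MinInv (y.take i) := by
  have key : ∀ (y : List ℕ), (∀ a ∈ y, 0 < a) → MinInv y →
      ∀ i, i ≤ y.length → MinInv (y.take i) := by
    intro y
    induction y using List.reverseRecOn with
    | nil =>
      intro _ hmin i hi
      simpa using hmin
    | append_singleton ys l ih =>
      intro hpos hm i hi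
      have hys : ∀ a ∈ ys, 0 < a := fun a ha => hpos a (List.mem_append.mpr (Or.inl ha))
      have hl : 0 < l := hpos l (List.mem_append.mpr (Or.inr (by simp)))
      rcases lt_or_eq_of_le hi with hlt | heq
      · have hile : i ≤ ys.length := by
          simp at hlt
          omega
        rw [List.take_append_of_le_length hile]
        exact ih hys (minInv_step ys l hys hl hm) i hile
      · rw [heq, List.take_length]
        exact hm
  exact fun i _ hi => key y hy hmin i hi
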